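/- Let B and C be unital C*-algebras, π : B → C a unital *-homomorphism, n ≥ 2 a natural number, and y₁,…,yₙ ∈ B with ‖Σᵢ yᵢ*yᵢ‖ ≤ 1 and π(Σᵢ yᵢ*yᵢ) = 1. Set d = (1 − Σᵢ yᵢ*yᵢ)^{1/2} and define ỹ₁ = [[y₁, 0], [d, 0]], ỹ₂ = [[y₂, 0], [0, 1]], and ỹᵢ = [[yᵢ, 0], [0, 0]] (3 ≤ i ≤ n) in M₂(B). Then for every pair (m, c) in the submonoid of the product monoid M₂(B) × C generated by the pairs (ỹᵢ, π(yᵢ)) and (ỹᵢ*, π(yᵢ)*) (1 ≤ i ≤ n), one has π(m₁₁) = c, where m₁₁ is the upper-left entry of m. In particular, every *-monomial evaluated at the ỹᵢ has upper-left entry mapping under π to the same *-monomial evaluated at the π(yᵢ). -/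

import Mathlib

open scoped Matrix

/-- Let `π : B → C` be a unital *-homomorphism, `y₁,…,yₙ ∈ B` with
`‖∑ yᵢ* yᵢ‖ ≤ 1` and `π(∑ yᵢ* yᵢ) = 1`, and let `ỹᵢ ∈ M₂(B)` be the dilations built from
`d = (1 - ∑ yᵢ* yᵢ)^{1/2}`.  Then every pair `(m, c)` in the submonoid of `M₂(B) × C`
generated by the pairs `(ỹᵢ, π(yᵢ))` and `(ỹᵢ*, π(yᵢ)*)` satisfies `π(m₁₁) = c`. -/
theorem starAlgHom_entry_eq_of_mem_closure_dilated_pairs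
    {B C : Type*} [CStarAlgebra B] [PartialOrder B] [StarOrderedRing B] [CStarAlgebra C]
    (π : B →⋆ₐ[ℂ] C)
    (n : ℕ) (hn : 2 ≤ n) (y : Fin n → B)
    (hy : ‖∑ i, star (y i) * y i‖ ≤ 1)
    (hπy : π (∑ i, star (y i) * y i) = 1)
    (d : B) (hd : d = CFC.sqrt (1 - ∑ i, star (y i) * y i))
    (Y : Fin n → Matrix (Fin 2) (Fin 2) B)
    (hY : ∀ i : Fin n, Y i =
      if (i : ℕ) = 0 then !![y i, 0; d, 0]
      else if (i : ℕ) = 1 then !![y i, 0; 0, 1]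
      else !![y i, 0; 0, 0]) :
    ∀ q ∈ Submonoid.closure {q : Matrix (Fin 2) (Fin 2) B × C |
        ∃ i : Fin n, q = (Y i, π (y i)) ∨ q = (star (Y i), star (π (y i)))},
      π (q.1 0 0) = q.2 := by
  have hsum : (0 : B) ≤ ∑ i, star (y i) * y i :=
    Finset.sum_nonneg fun i _ => star_mul_self_nonneg _
  have hle : (∑ i, star (y i) * y i) ≤ 1 :=
    (CStarAlgebra.norm_le_one_iff_of_nonneg _ hsum).mp hy
  have hpos : (0 : B) ≤ 1 - ∑ i, star (y i) * y i := sub_nonneg.mpr hle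
  have hd2 : d * d = 1 - ∑ i, star (y i) * y i := by
    rw [hd]; exact CFC.sqrt_mul_sqrt_self _ hpos
  have hπd : π d = 0 := by
    have h1 : π d * π d = 0 := by
      rw [← map_mul, hd2, map_sub, map_one, hπy, sub_self]
    have hds : IsSelfAdjoint d := by
      rw [hd]; exact IsSelfAdjoint.of_nonneg (CFC.sqrt_nonneg _)
    have hsa : star (π d) = π d := by
      rw [← map_star, hds.star_eq]
    have : ‖π d‖ * ‖π d‖ = 0 := by
      rw [← CStarRing.norm_star_mul_self, hsa, h1, norm_zero]
    have := mul_self_eq_zero.mp this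
    simpa [norm_eq_zero] using this
  suffices H : ∀ q ∈ Submonoid.closure {q : Matrix (Fin 2) (Fin 2) B × C |
        ∃ i : Fin n, q = (Y i, π (y i)) ∨ q = (star (Y i), star (π (y i)))},
      π (q.1 0 0) = q.2 ∧ π (q.1 0 1) = 0 ∧ π (q.1 1 0) = 0 by
    intro q hq
    exact (H q hq).1
  intro q hq
  induction hq using Submonoid.closure_induction with
  | mem q hq =>
    obtain ⟨i, hi | hi⟩ := hq <;> subst hi <;> rw [hY i] <;> split_ifs <;>
      simp [Matrix.star_apply, hπd, map_star]
  | one => simp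
  | mul a b _ _ ha hb =>
    obtain ⟨ha1, ha2, ha3⟩ := ha
    obtain ⟨hb1, hb2, hb3⟩ := hb
    refine ⟨?_, ?_, ?_⟩ <;>
      simp [Prod.fst_mul, Prod.snd_mul, Matrix.mul_apply, Fin.sum_univ_two,
        map_add, map_mul, ha1, ha2, ha3, hb1, hb2, hb3]
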